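/- In a semisimple abelian code algebra, the minimum of the apparent distance over all codewords equals the minimum over the nonzero idempotents of the code: Δ_{B,ᾱ}(C) = min{ Δ_B(M(φ_{ᾱ,e})) : e² = e ∈ C, e ≠ 0 }. -/

import Mathlib

attribute [local instance] Classical.propDecidable

/-- A family of ds-bounds (one relation for each length `m`). -/
abbrev DsFamily := ∀ m : ℕ, Set (ZMod m) → ℕ → Prop

/-- The ideal of relations `(X_i^{r_i} - 1)_i` in `F[X₁,…,X_s]`; the abelian
code algebra `F(r₁,…,r_s)` is the quotient by this ideal. -/
noncomputable def mvSpan (s : ℕ) (r : Fin s → ℕ) (F : Type*) [Field F] :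
    Ideal (MvPolynomial (Fin s) F) :=
  Ideal.span {g | ∃ i : Fin s, g = MvPolynomial.X i ^ r i - 1}

/-- The point `ᾱ^i = (α₁^{i₁}, …, α_s^{i_s})`. -/
def evalPt {s : ℕ} {r : Fin s → ℕ} {L : Type*} [Field L]
    (α : Fin s → L) (i : ∀ k, ZMod (r k)) : Fin s → L :=
  fun k => α k ^ (i k).val

/-- The hypermatrix of coefficients of the multivariate discrete Fourier
transform `φ_{ᾱ,c} = Σ_{i∈I} c(ᾱ^i) X^i` of `c`. -/
noncomputable def dftMatrix {s : ℕ} {r : Fin s → ℕ} {F L : Type*} [Field F]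
    [Field L] [Algebra F L] (α : Fin s → L) (c : MvPolynomial (Fin s) F) :
    (∀ k, ZMod (r k)) → L :=
  fun i => MvPolynomial.aeval (evalPt α i) c

/-- The defining set `D_ᾱ(S) = {i ∈ I : g(ᾱ^i) = 0 for all g ∈ S}`. -/
def definingSetMv {s : ℕ} (r : Fin s → ℕ) {F L : Type*} [Field F] [Field L]
    [Algebra F L] (α : Fin s → L) (S : Set (MvPolynomial (Fin s) F)) :
    Set (∀ k, ZMod (r k)) :=
  {i | ∀ g ∈ S, MvPolynomial.aeval (evalPt α i) g = 0}

/-- The optimal ds-bound `δ̄(N) = max{b : (N,b) ∈ δ}` (as a supremum in `ℕ∞`). -/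
noncomputable def dsOpt {n : ℕ} (δ : Set (ZMod n) → ℕ → Prop) (N : Set (ZMod n)) : ℕ∞ :=
  ⨆ a ∈ {a : ℕ | δ N a}, (a : ℕ∞)

/-- The `B`-apparent distance of an `s`-dimensional hypermatrix, defined
recursively: `Δ_B(0) = 0`; a nonzero `0`-dimensional hypermatrix (a scalar) has
apparent distance `1`; and for `s ≥ 1`,
`Δ_B(M) = max_j ω_j(M)·ε_j(M)` where `ω_j(M) = max_{δ∈B} δ̄(Z_{r_j} \ supp_j M)`
and `ε_j(M)` is the maximum of the apparent distances of the nonzero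
hypercolumns in direction `j`.  (For `s = 1` this reduces to
`Δ_B(v) = max_{δ∈B} δ̄(Z_n \ supp v)` on nonzero vectors.) -/
noncomputable def hypDist {L : Type*} [Field L] (B : Set DsFamily) :
    (s : ℕ) → (r : Fin s → ℕ) → ((∀ i, ZMod (r i)) → L) → ℕ∞
  | 0, _, M => if M = 0 then 0 else 1
  | s + 1, r, M =>
    if M = 0 then 0 else
      ⨆ j : Fin (s + 1),
        (⨆ δ ∈ B, dsOpt (δ (r j))
            {k : ZMod (r j) | (fun x => M (j.insertNth k x)) = 0}) *
        ⨆ k ∈ {k : ZMod (r j) | (fun x => M (j.insertNth k x)) ≠ 0},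
          hypDist B s (fun i => r (j.succAbove i)) (fun x => M (j.insertNth k x))

/-- The minimum Hamming distance of an abelian code `C` (an ideal of
`F[X₁,…,X_s]` containing the relations), codewords being represented by
polynomials with `i`-th partial degrees `< r i`. -/
noncomputable def minDistMv {s : ℕ} (r : Fin s → ℕ) {F : Type*} [Field F]
    (C : Ideal (MvPolynomial (Fin s) F)) : ℕ :=
  sInf {w | ∃ c ∈ C, c ≠ 0 ∧ (∀ i, MvPolynomial.degreeOf i c < r i) ∧
    w = c.support.card}

/-- The apparent distance of an abelian code `C` with respect to `ᾱ` and `B`: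
the minimum over nonzero codewords `c` of `Δ_B(M(φ_{ᾱ,c}))`. -/
noncomputable def appDistCodeAt {s : ℕ} (r : Fin s → ℕ) {F L : Type*} [Field F]
    [Field L] [Algebra F L] (B : Set DsFamily) (α : Fin s → L)
    (C : Ideal (MvPolynomial (Fin s) F)) : ℕ∞ :=
  ⨅ c ∈ {c | c ∈ C ∧ c ∉ mvSpan s r F}, hypDist B s r (dftMatrix (r := r) α c)

/-- The apparent distance of an abelian code `C` with respect to `B`:
the maximum over all tuples `ᾱ ∈ U` of primitive roots of unity of the
`(B,ᾱ)`-apparent distances. -/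
noncomputable def appDistCode {s : ℕ} (r : Fin s → ℕ) (F : Type*) (L : Type*)
    [Field F] [Field L] [Algebra F L] (B : Set DsFamily)
    (C : Ideal (MvPolynomial (Fin s) F)) : ℕ∞ :=
  ⨆ α ∈ {α : Fin s → L | ∀ i, IsPrimitiveRoot (α i) (r i)},
    appDistCodeAt r B α C

section Helpers

open MvPolynomial

lemma mvSpan_vanish {F L : Type*} [Field F] [Field L] [Algebra F L]
    {s : ℕ} {r : Fin s → ℕ} (α : Fin s → L) (hα : ∀ i, IsPrimitiveRoot (α i) (r i))
    {c : MvPolynomial (Fin s) F} (hc : c ∈ mvSpan s r F) (i : ∀ k, ZMod (r k)) :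
    MvPolynomial.aeval (evalPt α i) c = 0 := by
  have h : mvSpan s r F ≤ RingHom.ker ((MvPolynomial.aeval (R := F) (evalPt α i)).toRingHom) := by
    rw [mvSpan, Ideal.span_le]
    rintro g ⟨k, rfl⟩
    simp only [SetLike.mem_coe, RingHom.mem_ker, AlgHom.toRingHom_eq_coe, RingHom.coe_coe,
      map_sub, map_pow, aeval_X, map_one, evalPt]
    rw [← pow_mul, mul_comm, pow_mul, (hα k).pow_eq_one, one_pow, sub_self]
  exact h hc

lemma prod_sub_prod_mem {R : Type*} [CommRing R] (I : Ideal R) {ι : Type*}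
    (t : Finset ι) (a b : ι → R) (h : ∀ i ∈ t, a i - b i ∈ I) :
    (∏ i ∈ t, a i) - ∏ i ∈ t, b i ∈ I := by
  classical
  induction t using Finset.induction_on with
  | empty => simp
  | @insert j t' hj ih =>
    rw [Finset.prod_insert hj, Finset.prod_insert hj]
    have h1 : a j * ∏ i ∈ t', a i - a j * ∏ i ∈ t', b i ∈ I := by
      rw [← mul_sub]
      exact Ideal.mul_mem_left _ _ (ih fun i hi => h i (Finset.mem_insert_of_mem hi))
    have h2 : a j * ∏ i ∈ t', b i - b j * ∏ i ∈ t', b i ∈ I := by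
      rw [← sub_mul]
      exact Ideal.mul_mem_right _ _ (h j (Finset.mem_insert_self _ _))
    simpa using Ideal.add_mem I h1 h2

lemma pow_sub_pow_mod_mem {F : Type*} [Field F] {s : ℕ} (r : Fin s → ℕ)
    (hr : ∀ i, 0 < r i) (i : Fin s) (a : ℕ) :
    (X i : MvPolynomial (Fin s) F) ^ a - X i ^ (a % r i) ∈ mvSpan s r F := by
  obtain ⟨w, hw⟩ := sub_dvd_pow_sub_pow ((X i : MvPolynomial (Fin s) F) ^ r i) 1 (a / r i)
  have hmem : (X i : MvPolynomial (Fin s) F) ^ r i - 1 ∈ mvSpan s r F :=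
    Ideal.subset_span ⟨i, rfl⟩
  have key : (X i : MvPolynomial (Fin s) F) ^ a - X i ^ (a % r i)
      = ((X i ^ r i) ^ (a / r i) - 1 ^ (a / r i)) * X i ^ (a % r i) := by
    nth_rewrite 1 [← Nat.div_add_mod a (r i)]
    rw [pow_add, pow_mul, one_pow]
    ring
  rw [key, hw]
  exact Ideal.mul_mem_right _ _ (Ideal.mul_mem_right _ _ hmem)

lemma exists_reduced {F : Type*} [Field F] {s : ℕ} (r : Fin s → ℕ) (hr : ∀ i, 0 < r i)
    (c : MvPolynomial (Fin s) F) :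
    ∃ d : MvPolynomial (Fin s) F, (∀ i, degreeOf i d < r i) ∧ c - d ∈ mvSpan s r F := by
  classical
  set red : (Fin s →₀ ℕ) → (Fin s →₀ ℕ) :=
    fun m => Finsupp.equivFunOnFinite.symm (fun k => m k % r k) with hred
  have hredapp : ∀ m k, red m k = m k % r k := fun m k => rfl
  refine ⟨∑ m ∈ c.support, monomial (red m) (coeff m c), ?_, ?_⟩
  · intro i
    refine lt_of_le_of_lt (degreeOf_sum_le _ _ _) ?_
    rw [Finset.sup_lt_iff (by exact_mod_cast hr i)]
    intro m hm
    by_cases hc0 : coeff m c = 0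
    · simp [hc0, hr i]
    · rw [degreeOf_monomial_eq _ _ hc0, hredapp]
      exact Nat.mod_lt _ (hr i)
  · have hdiff : c - (∑ m ∈ c.support, monomial (red m) (coeff m c))
        = ∑ m ∈ c.support, (monomial m (coeff m c) - monomial (red m) (coeff m c)) := by
      rw [Finset.sum_sub_distrib, support_sum_monomial_coeff]
    rw [hdiff]
    refine Ideal.sum_mem _ fun m hm => ?_
    have hm1 : (monomial m (coeff m c) : MvPolynomial (Fin s) F)
        = C (coeff m c) * ∏ k, X k ^ m k := by
      rw [monomial_eq]
      congr 1
      exact Finsupp.prod_fintype _ _ (fun k => pow_zero _)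
    have hm2 : (monomial (red m) (coeff m c) : MvPolynomial (Fin s) F)
        = C (coeff m c) * ∏ k, X k ^ (red m k) := by
      rw [monomial_eq]
      congr 1
      exact Finsupp.prod_fintype _ _ (fun k => pow_zero _)
    rw [hm1, hm2, ← mul_sub]
    refine Ideal.mul_mem_left _ _ ?_
    refine prod_sub_prod_mem _ _ _ _ fun k _ => ?_
    rw [hredapp]
    exact pow_sub_pow_mod_mem r hr k (m k)

lemma vanish_zero {L : Type*} [Field L] :
    ∀ (s : ℕ) (r : Fin s → ℕ), (∀ i, 0 < r i) → ∀ (α : Fin s → L),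
    (∀ i, IsPrimitiveRoot (α i) (r i)) → ∀ (d : MvPolynomial (Fin s) L),
    (∀ i, degreeOf i d < r i) →
    (∀ t : Fin s → ℕ, (∀ k, t k < r k) → eval (fun k => α k ^ t k) d = 0) → d = 0 := by
  intro s
  induction s with
  | zero =>
    intro r _ α _ d _ hv
    have h0 := hv (fun k => 0) (fun k => k.elim0)
    rw [eq_C_of_isEmpty d] at h0 ⊢
    rw [eval_C] at h0
    rw [h0, map_zero]
  | succ n ih =>
    intro r hr α hα d hdeg hv
    set P := finSuccEquiv L n d with hP
    have key : ∀ t' : Fin n → ℕ, (∀ k, t' k < r k.succ) → ∀ j : ℕ,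
        eval (fun k => α k.succ ^ t' k) (P.coeff j) = 0 := by
      intro t' ht' j
      set Q := Polynomial.map (eval (fun k => α k.succ ^ t' k)) P with hQ
      have hQ0 : Q = 0 := by
        have hdQ : Q.natDegree < r 0 := by
          refine lt_of_le_of_lt Polynomial.natDegree_map_le ?_
          rw [hP, natDegree_finSuccEquiv]
          exact hdeg 0
        have hinj : Function.Injective (fun j : Fin (r 0) => α 0 ^ (j : ℕ)) := by
          intro a b hab
          exact Fin.ext ((hα 0).pow_inj a.isLt b.isLt hab)
        refine Polynomial.eq_zero_of_natDegree_lt_card_of_eval_eq_zero Q hinj ?_ ?_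
        · intro j
          have hb : ∀ k, Fin.cons (α := fun _ => ℕ) (j : ℕ) t' k < r k := by
            intro k
            refine Fin.cases ?_ ?_ k
            · simpa using j.isLt
            · intro k'
              simpa using ht' k'
          have hfun : (Fin.cons (α 0 ^ (j : ℕ)) (fun k => α k.succ ^ t' k) : Fin (n+1) → L)
              = fun k => α k ^ (Fin.cons (α := fun _ => ℕ) (j : ℕ) t' k) := by
            funext k
            refine Fin.cases ?_ ?_ k
            · simp
            · intro k'
              simp
          have := hv (Fin.cons (j : ℕ) t') hb
          rw [← hfun, eval_eq_eval_mv_eval'] at this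
          exact this
        · simpa using hdQ
      have := congrArg (fun q => Polynomial.coeff q j) hQ0
      simpa [hQ, Polynomial.coeff_map] using this
    have hcoeff : ∀ j : ℕ, P.coeff j = 0 := by
      intro j
      refine ih (fun k => r k.succ) (fun k => hr k.succ) (fun k => α k.succ)
        (fun k => hα k.succ) (P.coeff j) ?_ ?_
      · intro k
        exact lt_of_le_of_lt (degreeOf_coeff_finSuccEquiv d k j) (hdeg k.succ)
      · intro t' ht'
        exact key t' ht' j
    have hP0 : P = 0 := Polynomial.ext fun j => by rw [hcoeff j, Polynomial.coeff_zero]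
    have h2 : (finSuccEquiv L n).symm (finSuccEquiv L n d) = (finSuccEquiv L n).symm 0 := by
      rw [← hP, hP0]
    simpa using h2

lemma mem_mvSpan_iff_dft {F L : Type*} [Field F] [Field L] [Algebra F L]
    {s : ℕ} {r : Fin s → ℕ} (hr : ∀ i, 0 < r i) (α : Fin s → L)
    (hα : ∀ i, IsPrimitiveRoot (α i) (r i)) (c : MvPolynomial (Fin s) F) :
    c ∈ mvSpan s r F ↔ ∀ i : ∀ k, ZMod (r k), dftMatrix (r := r) α c i = 0 := by
  haveI : ∀ k : Fin s, NeZero (r k) := fun k => ⟨(hr k).ne'⟩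
  constructor
  · intro hc i
    exact mvSpan_vanish α hα hc i
  · intro hdft
    obtain ⟨d, hdeg, hcd⟩ := exists_reduced r hr c
    have hdv : ∀ i : ∀ k, ZMod (r k), MvPolynomial.aeval (evalPt α i) d = 0 := by
      intro i
      have h1 := mvSpan_vanish α hα hcd i
      have h2 := hdft i
      rw [dftMatrix] at h2
      rw [map_sub, h2, zero_sub, neg_eq_zero] at h1
      exact h1
    set φ := algebraMap F L with hφ
    have hinj : Function.Injective φ := (algebraMap F L).injective
    have hd0 : MvPolynomial.map φ d = 0 := by
      refine vanish_zero s r hr α hα _ ?_ ?_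
      · intro i
        rw [degreeOf, degrees_map_of_injective _ hinj, ← degreeOf]
        exact hdeg i
      · intro t ht
        have : (fun k => α k ^ t k) = evalPt (r := r) α (fun k => (t k : ZMod (r k))) := by
          funext k
          rw [evalPt, ZMod.val_cast_of_lt (ht k)]
        rw [eval_map, ← aeval_def, this]
        exact hdv _
    have hd : d = 0 := by
      apply map_injective (σ := Fin s) φ hinj
      rw [hd0, map_zero]
    rw [hd, sub_zero] at hcd
    exact hcd

lemma exists_pow_eq_one_of_isIntegral {F L : Type*} [Field F] [Fintype F] [Field L]
    [Algebra F L] {v : L} (hint : IsIntegral F v) (hv : v ≠ 0) :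
    ∃ n : ℕ, 0 < n ∧ v ^ n = 1 := by
  haveI : Module.Finite F (Algebra.adjoin F {v}) :=
    ⟨(Submodule.fg_top _).mpr hint.fg_adjoin_singleton⟩
  haveI : Finite (Algebra.adjoin F {v}) := Module.finite_of_finite F
  set g : ℕ → Algebra.adjoin F {v} :=
    fun n => ⟨v ^ n, pow_mem (Algebra.self_mem_adjoin_singleton F v) n⟩ with hg
  obtain ⟨a, b, hab, heq⟩ := Finite.exists_ne_map_eq_of_infinite g
  have hvab : v ^ a = v ^ b := congrArg Subtype.val heq
  rcases Nat.lt_or_ge a b with hlt | hge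
  · refine ⟨b - a, Nat.sub_pos_of_lt hlt, ?_⟩
    have : v ^ a * v ^ (b - a) = v ^ a * 1 := by
      rw [mul_one, ← pow_add, Nat.add_sub_cancel' (le_of_lt hlt)]
      exact hvab.symm
    exact mul_left_cancel₀ (pow_ne_zero a hv) this
  · have hlt : b < a := lt_of_le_of_ne hge (fun h => hab (h ▸ rfl))
    refine ⟨a - b, Nat.sub_pos_of_lt hlt, ?_⟩
    have : v ^ b * v ^ (a - b) = v ^ b * 1 := by
      rw [mul_one, ← pow_add, Nat.add_sub_cancel' (le_of_lt hlt)]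
      exact hvab
    exact mul_left_cancel₀ (pow_ne_zero b hv) this

lemma dft_isIntegral {F L : Type*} [Field F] [Field L] [Algebra F L]
    {s : ℕ} {r : Fin s → ℕ} (hr : ∀ i, 0 < r i) (α : Fin s → L)
    (hα : ∀ i, IsPrimitiveRoot (α i) (r i)) (c : MvPolynomial (Fin s) F)
    (i : ∀ k, ZMod (r k)) : IsIntegral F (dftMatrix (r := r) α c i) := by
  have hpt : ∀ k, IsIntegral F (evalPt (r := r) α i k) := by
    intro k
    refine IsIntegral.pow ?_ _
    refine ⟨Polynomial.X ^ r k - Polynomial.C 1, ?_, ?_⟩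
    · exact Polynomial.monic_X_pow_sub_C 1 (hr k).ne'
    · simp [(hα k).pow_eq_one]
  set pt' : Fin s → integralClosure F L := fun k => ⟨evalPt α i k, hpt k⟩ with hpt'
  have : dftMatrix (r := r) α c i = ((integralClosure F L).val (MvPolynomial.aeval pt' c)) := by
    rw [dftMatrix, MvPolynomial.comp_aeval_apply]
    rfl
  rw [this]
  exact (MvPolynomial.aeval pt' c).2

lemma hypDist_congr {L : Type*} [Field L] (B : Set DsFamily) :
    ∀ (s : ℕ) (r : Fin s → ℕ) (M M' : (∀ i, ZMod (r i)) → L),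
    (∀ i, M i = 0 ↔ M' i = 0) → hypDist B s r M = hypDist B s r M' := by
  intro s
  induction s with
  | zero =>
    intro r M M' h
    have hMM : M = 0 ↔ M' = 0 := by
      simp only [funext_iff, Pi.zero_apply]
      exact forall_congr' h
    simp only [hypDist]
    exact if_congr hMM rfl rfl
  | succ n ih =>
    intro r M M' h
    have hMM : M = 0 ↔ M' = 0 := by
      simp only [funext_iff, Pi.zero_apply]
      exact forall_congr' h
    have hslice : ∀ (j : Fin (n + 1)) (k : ZMod (r j)),
        ((fun x => M (j.insertNth k x)) = 0) ↔ ((fun x => M' (j.insertNth k x)) = 0) := by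
      intro j k
      simp only [funext_iff, Pi.zero_apply]
      exact forall_congr' fun x => h _
    simp only [hypDist]
    refine if_congr hMM rfl ?_
    refine iSup_congr fun j => ?_
    have hset1 : {k : ZMod (r j) | (fun x => M (j.insertNth k x)) = 0}
        = {k : ZMod (r j) | (fun x => M' (j.insertNth k x)) = 0} :=
      Set.ext fun k => hslice j k
    have hset2 : {k : ZMod (r j) | (fun x => M (j.insertNth k x)) ≠ 0}
        = {k : ZMod (r j) | (fun x => M' (j.insertNth k x)) ≠ 0} :=
      Set.ext fun k => not_congr (hslice j k)
    rw [hset1, hset2]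
    congr 1
    refine iSup_congr fun k => iSup_congr fun _ => ?_
    exact ih (fun i => r (j.succAbove i)) _ _ fun x => h _

end Helpers

/-- in the semisimple abelian code algebra, the minimum of the
apparent distance over the nonzero codewords of `C` equals the minimum over the
nonzero idempotents of `C` (elements `e ∈ C` with `e² = e` modulo the relations). -/
theorem appDistCodeAt_eq_inf_idempotents
    {F L : Type*} [Field F] [Fintype F] [Field L] [Algebra F L]
    (s : ℕ) (r : Fin s → ℕ) (hr : ∀ i, 0 < r i) (hss : ∀ i, ((r i : ℕ) : F) ≠ 0)
    (α : Fin s → L) (hα : ∀ i, IsPrimitiveRoot (α i) (r i))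
    (B : Set DsFamily)
    (C : Ideal (MvPolynomial (Fin s) F)) (hC : mvSpan s r F ≤ C) :
    appDistCodeAt r B α C =
      ⨅ e ∈ {e | e ∈ C ∧ e ∉ mvSpan s r F ∧ e * e - e ∈ mvSpan s r F},
        hypDist B s r (dftMatrix (r := r) α e) := by
  haveI : ∀ k : Fin s, NeZero (r k) := fun k => ⟨(hr k).ne'⟩
  apply le_antisymm
  · rw [appDistCodeAt]
    refine le_iInf₂ fun e he => ?_
    exact iInf₂_le e ⟨he.1, he.2.1⟩
  · rw [appDistCodeAt]
    refine le_iInf₂ fun c hc => ?_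
    obtain ⟨hcC, hcN⟩ := hc
    set v : (∀ k, ZMod (r k)) → L := dftMatrix (r := r) α c with hv
    have hn : ∀ i : ∀ k, ZMod (r k), ∃ n : ℕ, 0 < n ∧ (v i ≠ 0 → v i ^ n = 1) := by
      intro i
      by_cases h0 : v i = 0
      · exact ⟨1, one_pos, fun h => absurd h0 h⟩
      · obtain ⟨n, hn1, hn2⟩ :=
          exists_pow_eq_one_of_isIntegral (dft_isIntegral hr α hα c i) h0
        exact ⟨n, hn1, fun _ => hn2⟩
    choose n hn1 hn2 using hn
    set N : ℕ := ∏ i : (∀ k, ZMod (r k)), n i with hN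
    have hN1 : 0 < N := Finset.prod_pos (fun i _ => hn1 i)
    have hvN : ∀ i, v i ≠ 0 → v i ^ N = 1 := by
      intro i hvi
      obtain ⟨m, hm⟩ := Finset.dvd_prod_of_mem n (Finset.mem_univ i)
      rw [hN, hm, pow_mul, hn2 i hvi, one_pow]
    set e := c ^ N with he
    have hdfte : ∀ i, dftMatrix (r := r) α e i = v i ^ N := by
      intro i
      rw [he, dftMatrix, map_pow]
      rfl
    have hsupp : ∀ i, dftMatrix (r := r) α e i = 0 ↔ v i = 0 := by
      intro i
      rw [hdfte i]
      exact pow_eq_zero_iff hN1.ne'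
    have heC : e ∈ C := by
      rw [he]
      obtain ⟨N', hN'⟩ : ∃ N', N = N' + 1 := ⟨N - 1, (Nat.succ_pred_eq_of_pos hN1).symm⟩
      rw [hN', pow_succ]
      exact Ideal.mul_mem_left _ _ hcC
    have heN : e ∉ mvSpan s r F := by
      intro hmem
      apply hcN
      rw [mem_mvSpan_iff_dft hr α hα]
      intro i
      have h1 := (mem_mvSpan_iff_dft hr α hα e).mp hmem i
      rw [hsupp i] at h1
      exact h1
    have hidem : e * e - e ∈ mvSpan s r F := by
      rw [mem_mvSpan_iff_dft hr α hα]
      intro i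
      have hcomp : dftMatrix (r := r) α (e * e - e) i
          = dftMatrix (r := r) α e i * dftMatrix (r := r) α e i
            - dftMatrix (r := r) α e i := by
        simp [dftMatrix]
      rw [hcomp, hdfte i]
      by_cases h0 : v i = 0
      · rw [h0, zero_pow hN1.ne']
        ring
      · rw [hvN i h0]
        ring
    have hdist : hypDist B s r (dftMatrix (r := r) α e)
        = hypDist B s r (dftMatrix (r := r) α c) :=
      hypDist_congr B s r _ _ fun i => hsupp i
    calc (⨅ e ∈ {e | e ∈ C ∧ e ∉ mvSpan s r F ∧ e * e - e ∈ mvSpan s r F},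
            hypDist B s r (dftMatrix (r := r) α e))
        ≤ hypDist B s r (dftMatrix (r := r) α e) := iInf₂_le e ⟨heC, heN, hidem⟩
      _ = hypDist B s r (dftMatrix (r := r) α c) := hdist
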